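/- Ky Fan's determinant inequality: Let A and B be m×m Hermitian positive definite complex matrices and let λ ∈ [0,1]. Then det(λA + (1−λ)B) ≥ (det A)^λ (det B)^{1−λ}. -/

import Mathlib

open scoped ComplexOrder

open Matrix in
private lemma posDef_conj_aux {n : Type*} [Fintype n] [DecidableEq n]
    {B M : Matrix n n ℂ} (hB : B.PosDef) (hM : IsUnit M) : (Mᴴ * B * M).PosDef := by
  exact hB.conjTranspose_mul_mul_same (Matrix.mulVec_injective_iff_isUnit.mpr hM)

/-- **Ky Fan's determinant inequality.** If `A` and `B` are Hermitian positive definite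
complex matrices and `λ ∈ [0,1]`, then
`det(λ A + (1-λ) B) ≥ (det A)^λ (det B)^(1-λ)`.
(The determinants of Hermitian positive definite matrices are positive reals, realized
here via the real part; the right-hand side uses real powers.) -/
theorem ky_fan_determinant_inequality {m : ℕ}
    (A B : Matrix (Fin m) (Fin m) ℂ) (hA : A.PosDef) (hB : B.PosDef)
    (lam : ℝ) (h0 : 0 ≤ lam) (h1 : lam ≤ 1) :
    A.det.re ^ lam * B.det.re ^ (1 - lam) ≤
      ((lam : ℂ) • A + ((1 - lam : ℝ) : ℂ) • B).det.re := by
  classical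
  open Matrix in
  -- the square root of A
  open scoped MatrixOrder in
  set C : Matrix (Fin m) (Fin m) ℂ := CFC.sqrt A with hCdef
  open scoped MatrixOrder in
  have hCherm : C.IsHermitian := (CFC.sqrt_nonneg A).posSemidef.1
  open scoped MatrixOrder in
  have hCC : C * C = A := CFC.sqrt_mul_sqrt_self A hA.posSemidef.nonneg
  have haPos : (0:ℂ) < A.det := hA.det_pos
  have hbPos : (0:ℂ) < B.det := hB.det_pos
  have haRe : 0 < A.det.re := (Complex.lt_def.mp haPos).1
  have haIm : A.det.im = 0 := ((Complex.lt_def.mp haPos).2).symm.trans rfl |>.symm ▸ (Complex.lt_def.mp haPos).2.symm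
  have hdetCC : C.det * C.det = A.det := by rw [← det_mul, hCC]
  have hdetC_ne : C.det ≠ 0 := by
    intro h
    rw [h, mul_zero] at hdetCC
    exact haPos.ne' hdetCC.symm
  have hCunit : IsUnit C := (Matrix.isUnit_iff_isUnit_det C).mpr hdetC_ne.isUnit
  have hCinv_herm : C⁻¹.IsHermitian := hCherm.inv
  -- D = C⁻¹ B C⁻¹ is positive definite
  set D : Matrix (Fin m) (Fin m) ℂ := C⁻¹ * B * C⁻¹ with hDdef
  have hD : D.PosDef := by
    have h := posDef_conj_aux hB (M := C⁻¹) ((Matrix.isUnit_nonsing_inv_iff).mpr hCunit)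
    rwa [hCinv_herm.eq] at h
  -- key factorization
  have hfact : (lam : ℂ) • A + ((1 - lam : ℝ) : ℂ) • B
      = C * ((lam : ℂ) • 1 + ((1 - lam : ℝ) : ℂ) • D) * C := by
    have hCDC : C * D * C = B := by
      rw [hDdef]
      rw [show C * (C⁻¹ * B * C⁻¹) * C = (C * C⁻¹) * B * (C⁻¹ * C) by simp only [mul_assoc]]
      rw [mul_nonsing_inv _ hdetC_ne.isUnit, nonsing_inv_mul _ hdetC_ne.isUnit, one_mul, mul_one]
    rw [mul_add, add_mul, mul_smul_comm, mul_smul_comm, smul_mul_assoc, smul_mul_assoc,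
      mul_one, hCC, hCDC]
  -- eigenvalues of D
  set μ : Fin m → ℝ := hD.1.eigenvalues with hμ
  have hμpos : ∀ i, 0 < μ i := hD.eigenvalues_pos
  set U : Matrix (Fin m) (Fin m) ℂ := (hD.1.eigenvectorUnitary : Matrix (Fin m) (Fin m) ℂ) with hU
  have hUU : U * star U = 1 := (Matrix.mem_unitaryGroup_iff).mp hD.1.eigenvectorUnitary.2
  have hspec : D = U * Matrix.diagonal (RCLike.ofReal ∘ μ) * star U := hD.1.spectral_theorem
  -- determinant of the convex combination
  have hdetM : ((lam : ℂ) • 1 + ((1 - lam : ℝ) : ℂ) • D).det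
      = ∏ i, ((lam : ℂ) + ((1 - lam : ℝ) : ℂ) * (μ i : ℂ)) := by
    have h1' : (lam : ℂ) • (1 : Matrix (Fin m) (Fin m) ℂ)
        = U * ((lam : ℂ) • 1) * star U := by
      rw [mul_smul_comm, smul_mul_assoc, mul_one, hUU]
    have : (lam : ℂ) • (1 : Matrix (Fin m) (Fin m) ℂ) + ((1 - lam : ℝ) : ℂ) • D
        = U * ((lam : ℂ) • 1 + ((1 - lam : ℝ) : ℂ) • Matrix.diagonal (RCLike.ofReal ∘ μ))
          * star U := by
      rw [mul_add, add_mul, ← h1', hspec, mul_smul_comm, smul_mul_assoc]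
    rw [this, Matrix.det_mul_right_comm, hUU, one_mul]
    have hdiag : (lam : ℂ) • (1 : Matrix (Fin m) (Fin m) ℂ)
        + ((1 - lam : ℝ) : ℂ) • Matrix.diagonal (RCLike.ofReal ∘ μ)
        = Matrix.diagonal (fun i => (lam : ℂ) + ((1 - lam : ℝ) : ℂ) * (μ i : ℂ)) := by
      ext i j
      rcases eq_or_ne i j with rfl | h
      · simp [Matrix.diagonal_apply_eq, Matrix.one_apply_eq]
      · simp [Matrix.diagonal_apply_ne _ h, Matrix.one_apply_ne h]
    rw [hdiag, Matrix.det_diagonal]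
  have hdetTotal : ((lam : ℂ) • A + ((1 - lam : ℝ) : ℂ) • B).det
      = A.det * ∏ i, ((lam : ℂ) + ((1 - lam : ℝ) : ℂ) * (μ i : ℂ)) := by
    rw [hfact, Matrix.det_mul, Matrix.det_mul, hdetM, ← hdetCC]
    ring
  -- pass to real parts
  have hAdet_eq : A.det = (A.det.re : ℂ) := by
    apply Complex.ext <;> simp [(Complex.lt_def.mp haPos).2.symm]
  have hBdet_eq : B.det = (B.det.re : ℂ) := by
    apply Complex.ext <;> simp [(Complex.lt_def.mp hbPos).2.symm]
  set a := A.det.re with ha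
  set b := B.det.re with hb
  have hbRe : 0 < b := (Complex.lt_def.mp hbPos).1
  have hprod_cast : (∏ i, ((lam : ℂ) + ((1 - lam : ℝ) : ℂ) * (μ i : ℂ)))
      = ((∏ i, (lam + (1 - lam) * μ i) : ℝ) : ℂ) := by
    push_cast
    rfl
  have hre : ((lam : ℂ) • A + ((1 - lam : ℝ) : ℂ) • B).det.re
      = a * ∏ i, (lam + (1 - lam) * μ i) := by
    rw [hdetTotal, hprod_cast, hAdet_eq, ← Complex.ofReal_mul, Complex.ofReal_re]
  -- determinant of D
  have hdetD : (∏ i, μ i) = b / a := by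
    have h1 : D.det = B.det / A.det := by
      rw [hDdef, Matrix.det_mul, Matrix.det_mul, Matrix.det_nonsing_inv, Ring.inverse_eq_inv]
      field_simp [hdetC_ne, ← hdetCC]
      rw [← hdetCC]; ring
    have h2 : D.det = ((∏ i, μ i : ℝ) : ℂ) := by
      rw [hD.1.det_eq_prod_eigenvalues]
      push_cast
      rfl
    have : ((∏ i, μ i : ℝ) : ℂ) = ((b / a : ℝ) : ℂ) := by
      rw [← h2, h1, hAdet_eq, hBdet_eq]
      push_cast
      ring
    exact_mod_cast this
  -- the scalar inequality
  rw [hre]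
  have key : (b / a) ^ (1 - lam) ≤ ∏ i, (lam + (1 - lam) * μ i) := by
    calc (b / a) ^ (1 - lam) = (∏ i, μ i) ^ (1 - lam) := by rw [hdetD]
    _ = ∏ i, (μ i) ^ (1 - lam) := by
        rw [← Real.finset_prod_rpow _ _ (fun i _ => (hμpos i).le)]
    _ ≤ ∏ i, (lam + (1 - lam) * μ i) := by
        apply Finset.prod_le_prod
        · exact fun i _ => Real.rpow_nonneg (hμpos i).le _
        · intro i _
          have := Real.geom_mean_le_arith_mean2_weighted h0 (by linarith : (0:ℝ) ≤ 1 - lam)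
            zero_le_one (hμpos i).le (by ring)
          simpa using this
  have hx : a ^ lam * a ^ (1 - lam) = a := by
    rw [← Real.rpow_add haRe]
    norm_num
  have hane : a ^ (1 - lam) ≠ 0 := (Real.rpow_pos_of_pos haRe _).ne'
  calc a ^ lam * b ^ (1 - lam) = a * (b / a) ^ (1 - lam) := by
        rw [Real.div_rpow hbRe.le haRe.le, ← mul_div_assoc, eq_div_iff hane,
          mul_right_comm, hx]
  _ ≤ a * ∏ i, (lam + (1 - lam) * μ i) := by
        exact mul_le_mul_of_nonneg_left key haRe.le
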